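/- Let I₁ ≠ 0, I₂, I₃, J₁, J₂ > 0, c_u, c_y, c_v be real constants. Then the curve s ↦ (u(s), v(s), y(s), z(s)) defined by u(s) = −I₁ s + c_u, y(s) = I₃ s + c_y, z(s) = √(((2J₂ s + J₁)² + 8 I₁²)/(4 J₂)), v(s) = √2 · arctan((2J₂ s + J₁)/(2√2 I₁)) − I₂ s + c_v is an affinely parametrized geodesic of the Biv pp-wave metric, i.e. it satisfies q̈^α + Γ^α_{μν}(q) q̇^μ q̇^ν = 0 for all s ∈ ℝ. -/

import Mathlib

open scoped BigOperators

noncomputable section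

namespace BivPPWave

/-- Partial derivative `∂_σ f` at `x ∈ ℝ⁴`. -/
def pderiv' (f : (Fin 4 → ℝ) → ℝ) (σ : Fin 4) (x : Fin 4 → ℝ) : ℝ :=
  fderiv ℝ f x (Pi.single σ 1)

/-- The Biv pp-wave metric, coordinates `u = x 0`, `v = x 1`, `y = x 2`, `z = x 3`. -/
def Biv (x : Fin 4 → ℝ) : Fin 4 → Fin 4 → ℝ :=
  ![![-2 / (x 3)^2, -1, 0, 0],
    ![-1, 0, 0, 0],
    ![0, 0, 1, 0],
    ![0, 0, 0, 1]]

/-- Components `G^{αβ}` of the inverse metric. -/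
def metricInv (G : (Fin 4 → ℝ) → Fin 4 → Fin 4 → ℝ) (x : Fin 4 → ℝ) :
    Fin 4 → Fin 4 → ℝ :=
  fun α β => (Matrix.of (G x))⁻¹ α β

/-- Christoffel symbols `Γ^α_{μν}` of the metric `G`. -/
def christoffel (G : (Fin 4 → ℝ) → Fin 4 → Fin 4 → ℝ) (x : Fin 4 → ℝ)
    (α μ ν : Fin 4) : ℝ :=
  (1/2) * ∑ σ, metricInv G x α σ *
    (pderiv' (fun y => G y σ ν) μ x + pderiv' (fun y => G y σ μ) ν x
      - pderiv' (fun y => G y μ ν) σ x)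

/-- Derivative of the `i`-th component of a curve. -/
def qd (q : ℝ → Fin 4 → ℝ) (i : Fin 4) (s : ℝ) : ℝ :=
  deriv (fun t => q t i) s

/-- The explicit curve `u(s) = −I₁s + c_u`,
`v(s) = √2·arctan((2J₂s + J₁)/(2√2 I₁)) − I₂s + c_v`, `y(s) = I₃s + c_y`,
`z(s) = √(((2J₂s + J₁)² + 8I₁²)/(4J₂))`. -/
def geoCurve (I₁ I₂ I₃ J₁ J₂ c_u c_y c_v : ℝ) (s : ℝ) : Fin 4 → ℝ :=
  ![-I₁ * s + c_u,
    Real.sqrt 2 * Real.arctan ((2 * J₂ * s + J₁) / (2 * Real.sqrt 2 * I₁)) - I₂ * s + c_v,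
    I₃ * s + c_y,
    Real.sqrt (((2 * J₂ * s + J₁)^2 + 8 * I₁^2) / (4 * J₂))]

/-! ### Auxiliary lemmas on the metric -/

lemma metricInv_Biv (x : Fin 4 → ℝ) (hx : x 3 ≠ 0) (α β : Fin 4) :
    metricInv Biv x α β =
      ![![0,-1,0,0],![-1,2/(x 3)^2,0,0],![0,0,1,0],![(0:ℝ),0,0,1]] α β := by
  have h : (Matrix.of (Biv x)) *
      (Matrix.of ![![0,-1,0,0],![-1,2/(x 3)^2,0,0],![0,0,1,0],![(0:ℝ),0,0,1]]) = 1 := by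
    ext i j
    fin_cases i <;> fin_cases j <;>
      simp [Matrix.mul_apply, Fin.sum_univ_four, Biv, Matrix.one_apply,
        Matrix.vecHead, Matrix.vecTail] <;>
      field_simp <;> ring
  rw [metricInv, Matrix.inv_eq_right_inv h]
  rfl

lemma hasFDerivAt_Bivuu (x : Fin 4 → ℝ) (hx : x 3 ≠ 0) :
    HasFDerivAt (fun y : Fin 4 → ℝ => -2 / (y 3)^2)
      ((4/(x 3)^3) • (ContinuousLinearMap.proj 3 : (Fin 4 → ℝ) →L[ℝ] ℝ)) x := by
  have h3 : HasFDerivAt (fun y : Fin 4 → ℝ => y 3)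
      (ContinuousLinearMap.proj 3 : (Fin 4 → ℝ) →L[ℝ] ℝ) x :=
    (ContinuousLinearMap.proj (R := ℝ) (φ := fun _ : Fin 4 => ℝ) 3).hasFDerivAt
  have hg : HasDerivAt (fun t : ℝ => -2 / t^2) (4/(x 3)^3) (x 3) := by
    have h1 := ((hasDerivAt_pow 2 (x 3)).inv (pow_ne_zero 2 hx)).const_mul (-2 : ℝ)
    have heq : (fun t : ℝ => -2 * (t^2)⁻¹) = fun t : ℝ => -2 / t^2 := by
      funext t; rw [div_eq_mul_inv]
    simp only [Pi.inv_apply] at h1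
    rw [heq] at h1
    refine h1.congr_deriv (Eq.symm ?_)
    field_simp
    ring
  exact hg.comp_hasFDerivAt (f := fun y : Fin 4 → ℝ => y 3) x h3

lemma pderiv_Biv (x : Fin 4 → ℝ) (hx : x 3 ≠ 0) (σ ν μ : Fin 4) :
    pderiv' (fun y => Biv y σ ν) μ x =
      if σ = 0 ∧ ν = 0 ∧ μ = 3 then 4/(x 3)^3 else 0 := by
  have key : ∀ μ : Fin 4, pderiv' (fun y => -2 / (y 3)^2) μ x =
      (4/(x 3)^3) * (if (3 : Fin 4) = μ then 1 else 0) := by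
    intro μ
    rw [pderiv', (hasFDerivAt_Bivuu x hx).fderiv]
    simp [Pi.single_apply]
  fin_cases σ <;> fin_cases ν <;>
    simp only [Biv, Fin.reduceFinMk, Matrix.cons_val_zero, Matrix.cons_val_one,
      Matrix.head_cons, Matrix.cons_val_two, Matrix.tail_cons, Matrix.cons_val_three,
      Matrix.vecHead, Matrix.vecTail] <;>
    first
      | (rw [key]; fin_cases μ <;> simp)
      | (fin_cases μ <;> simp [pderiv'])

lemma christoffel_Biv (x : Fin 4 → ℝ) (hx : x 3 ≠ 0) (α μ ν : Fin 4) :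
    christoffel Biv x α μ ν =
      if (α = 3 ∧ μ = 0 ∧ ν = 0) ∨ (α = 1 ∧ ((μ = 0 ∧ ν = 3) ∨ (μ = 3 ∧ ν = 0)))
      then -2/(x 3)^3 else 0 := by
  rw [christoffel]
  simp only [Fin.sum_univ_four, metricInv_Biv x hx, pderiv_Biv x hx]
  fin_cases α <;> fin_cases μ <;> fin_cases ν <;>
    simp [Matrix.vecHead, Matrix.vecTail] <;> ring_nf

/-! ### Auxiliary lemmas on the curve -/

def wf (J₁ J₂ t : ℝ) : ℝ := 2 * J₂ * t + J₁
def zf (I₁ J₁ J₂ t : ℝ) : ℝ := Real.sqrt ((wf J₁ J₂ t ^ 2 + 8 * I₁^2) / (4 * J₂))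

variable {I₁ I₂ J₁ J₂ c_v : ℝ}

lemma E_pos (hI₁ : I₁ ≠ 0) (hJ₂ : 0 < J₂) (t : ℝ) :
    0 < (wf J₁ J₂ t ^ 2 + 8 * I₁^2) / (4 * J₂) := by positivity

lemma zf_pos (hI₁ : I₁ ≠ 0) (hJ₂ : 0 < J₂) (t : ℝ) : 0 < zf I₁ J₁ J₂ t :=
  Real.sqrt_pos.mpr (E_pos hI₁ hJ₂ t)

lemma zf_sq (hI₁ : I₁ ≠ 0) (hJ₂ : 0 < J₂) (t : ℝ) :
    4 * J₂ * zf I₁ J₁ J₂ t ^ 2 = wf J₁ J₂ t ^ 2 + 8 * I₁^2 := by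
  rw [zf, Real.sq_sqrt (E_pos hI₁ hJ₂ t).le]
  field_simp

lemma hasDerivAt_wf (t : ℝ) : HasDerivAt (wf J₁ J₂) (2 * J₂) t := by
  unfold wf
  simpa using ((hasDerivAt_id t).const_mul (2 * J₂)).add_const J₁

lemma hasDerivAt_zf (hI₁ : I₁ ≠ 0) (hJ₂ : 0 < J₂) (t : ℝ) :
    HasDerivAt (zf I₁ J₁ J₂) (wf J₁ J₂ t / (2 * zf I₁ J₁ J₂ t)) t := by
  have hE : HasDerivAt (fun t => (wf J₁ J₂ t ^ 2 + 8 * I₁^2) / (4 * J₂)) (wf J₁ J₂ t) t := by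
    have h := (((hasDerivAt_wf (J₁:=J₁) (J₂:=J₂) t).pow 2).add_const (8 * I₁^2)).div_const (4 * J₂)
    refine h.congr_deriv (Eq.symm ?_)
    field_simp
    ring
  have h := (Real.hasDerivAt_sqrt (ne_of_gt (E_pos hI₁ hJ₂ t))).comp t hE
  refine h.congr_deriv (Eq.symm ?_)
  rw [zf]
  field_simp

lemma hasDerivAt_zdot (hI₁ : I₁ ≠ 0) (hJ₂ : 0 < J₂) (t : ℝ) :
    HasDerivAt (fun t => wf J₁ J₂ t / (2 * zf I₁ J₁ J₂ t))
      (2 * I₁^2 / zf I₁ J₁ J₂ t ^ 3) t := by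
  have hz := hasDerivAt_zf hI₁ hJ₂ (J₁ := J₁) t
  have hzpos := zf_pos hI₁ hJ₂ (J₁ := J₁) t
  have h := (hasDerivAt_wf (J₁:=J₁) (J₂:=J₂) t).div (hz.const_mul 2)
    (by positivity)
  refine h.congr_deriv (Eq.symm ?_)
  have h4 := zf_sq hI₁ hJ₂ (J₁ := J₁) t
  field_simp
  linear_combination (-1) * h4

lemma hasDerivAt_vdot (hI₁ : I₁ ≠ 0) (hJ₂ : 0 < J₂) (t : ℝ) :
    HasDerivAt (fun t => 2 * I₁ / zf I₁ J₁ J₂ t ^ 2 - I₂)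
      (-2 * I₁ * wf J₁ J₂ t / zf I₁ J₁ J₂ t ^ 4) t := by
  have hz := hasDerivAt_zf hI₁ hJ₂ (J₁ := J₁) t
  have hzpos := zf_pos hI₁ hJ₂ (J₁ := J₁) t
  have h := (((hasDerivAt_const t (2*I₁)).div (hz.pow 2) (pow_ne_zero 2 hzpos.ne')).sub_const I₂)
  refine h.congr_deriv (Eq.symm ?_)
  push_cast
  field_simp
  simp only [Pi.pow_apply]
  ring

lemma hasDerivAt_vf (hI₁ : I₁ ≠ 0) (hJ₂ : 0 < J₂) (t : ℝ) :
    HasDerivAt (fun t => Real.sqrt 2 * Real.arctan (wf J₁ J₂ t / (2 * Real.sqrt 2 * I₁)) - I₂ * t + c_v)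
      (2 * I₁ / zf I₁ J₁ J₂ t ^ 2 - I₂) t := by
  have hs2 : Real.sqrt 2 > 0 := by positivity
  have hzpos := zf_pos hI₁ hJ₂ (J₁ := J₁) t
  have hinner : HasDerivAt (fun t => wf J₁ J₂ t / (2 * Real.sqrt 2 * I₁))
      (2 * J₂ / (2 * Real.sqrt 2 * I₁)) t :=
    (hasDerivAt_wf (J₁:=J₁) (J₂:=J₂) t).div_const _
  have harc := (Real.hasDerivAt_arctan (wf J₁ J₂ t / (2 * Real.sqrt 2 * I₁))).comp t hinner
  have h := ((harc.const_mul (Real.sqrt 2)).sub ((hasDerivAt_id t).const_mul I₂)).add_const c_v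
  refine h.congr_deriv (Eq.symm ?_)
  have h4 := zf_sq hI₁ hJ₂ (J₁ := J₁) t
  have h2 : Real.sqrt 2 ^ 2 = 2 := Real.sq_sqrt (by norm_num)
  have hden : 1 + (wf J₁ J₂ t / (2 * Real.sqrt 2 * I₁))^2 > 0 := by positivity
  field_simp
  linear_combination (-2 * I₁) * h4 +
    (8 * I₁ ^ 3 - 4 * I₁ * J₂ * zf I₁ J₁ J₂ t ^ 2) * h2

/-- The explicit curve `geoCurve` is an affinely parametrized geodesic of
the Biv pp-wave metric: it satisfies `q̈^α + Γ^α_{μν}(q) q̇^μ q̇^ν = 0` for all `s ∈ ℝ`. -/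
theorem biv_explicit_geodesic
    (I₁ I₂ I₃ J₁ J₂ c_u c_y c_v : ℝ) (hI₁ : I₁ ≠ 0) (hJ₂ : 0 < J₂) :
    ∀ s : ℝ, ∀ α : Fin 4,
      deriv (deriv (fun t => geoCurve I₁ I₂ I₃ J₁ J₂ c_u c_y c_v t α)) s
        + (∑ μ, ∑ ν, christoffel Biv (geoCurve I₁ I₂ I₃ J₁ J₂ c_u c_y c_v s) α μ ν
            * qd (geoCurve I₁ I₂ I₃ J₁ J₂ c_u c_y c_v) μ s
            * qd (geoCurve I₁ I₂ I₃ J₁ J₂ c_u c_y c_v) ν s) = 0 := by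
  intro s α
  set q := geoCurve I₁ I₂ I₃ J₁ J₂ c_u c_y c_v with hq
  have hzpos := zf_pos hI₁ hJ₂ (J₁ := J₁) s
  -- component functions
  have hc0 : (fun t => q t 0) = fun t => -I₁ * t + c_u := by
    funext t; simp [hq, geoCurve]
  have hc1 : (fun t => q t 1) = fun t =>
      Real.sqrt 2 * Real.arctan (wf J₁ J₂ t / (2 * Real.sqrt 2 * I₁)) - I₂ * t + c_v := by
    funext t; simp [hq, geoCurve, wf]
  have hc2 : (fun t => q t 2) = fun t => I₃ * t + c_y := by
    funext t; simp [hq, geoCurve]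
  have hc3 : (fun t => q t 3) = zf I₁ J₁ J₂ := by
    funext t; simp [hq, geoCurve, zf, wf]
  have hx3 : q s 3 = zf I₁ J₁ J₂ s := by simp [hq, geoCurve, zf, wf]
  have hx3ne : q s 3 ≠ 0 := by rw [hx3]; exact ne_of_gt hzpos
  -- first derivatives
  have hd0 : ∀ t, deriv (fun t => q t 0) t = -I₁ := by
    intro t; rw [hc0]
    simpa using (((hasDerivAt_id t).const_mul (-I₁)).add_const c_u).deriv
  have hd1 : ∀ t, deriv (fun t => q t 1) t = 2 * I₁ / zf I₁ J₁ J₂ t ^ 2 - I₂ := by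
    intro t; rw [hc1]; exact (hasDerivAt_vf hI₁ hJ₂ t).deriv
  have hd2 : ∀ t, deriv (fun t => q t 2) t = I₃ := by
    intro t; rw [hc2]
    simpa using (((hasDerivAt_id t).const_mul I₃).add_const c_y).deriv
  have hd3 : ∀ t, deriv (fun t => q t 3) t = wf J₁ J₂ t / (2 * zf I₁ J₁ J₂ t) := by
    intro t; rw [hc3]; exact (hasDerivAt_zf hI₁ hJ₂ t).deriv
  have hqd0 : qd q 0 s = -I₁ := hd0 s
  have hqd1 : qd q 1 s = 2 * I₁ / zf I₁ J₁ J₂ s ^ 2 - I₂ := hd1 s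
  have hqd2 : qd q 2 s = I₃ := hd2 s
  have hqd3 : qd q 3 s = wf J₁ J₂ s / (2 * zf I₁ J₁ J₂ s) := hd3 s
  -- second derivatives
  have hdd0 : deriv (deriv (fun t => q t 0)) s = 0 := by
    rw [funext hd0]; simp
  have hdd1 : deriv (deriv (fun t => q t 1)) s
      = -2 * I₁ * wf J₁ J₂ s / zf I₁ J₁ J₂ s ^ 4 := by
    rw [funext hd1]; exact (hasDerivAt_vdot hI₁ hJ₂ s).deriv
  have hdd2 : deriv (deriv (fun t => q t 2)) s = 0 := by
    rw [funext hd2]; simp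
  have hdd3 : deriv (deriv (fun t => q t 3)) s
      = 2 * I₁^2 / zf I₁ J₁ J₂ s ^ 3 := by
    rw [funext hd3]; exact (hasDerivAt_zdot hI₁ hJ₂ s).deriv
  -- the geodesic equation, componentwise
  have hsimp : ∀ α : Fin 4,
      (∑ μ, ∑ ν, christoffel Biv (q s) α μ ν * qd q μ s * qd q ν s)
        = if α = 3 then -2 / zf I₁ J₁ J₂ s ^ 3 * (-I₁) * (-I₁)
          else if α = 1 then 2 * (-2 / zf I₁ J₁ J₂ s ^ 3 * (-I₁)
            * (wf J₁ J₂ s / (2 * zf I₁ J₁ J₂ s)))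
          else 0 := by
    intro α
    simp only [Fin.sum_univ_four, christoffel_Biv (q s) hx3ne, hx3,
      hqd0, hqd1, hqd2, hqd3]
    fin_cases α <;> simp <;> ring
  fin_cases α <;> rw [hsimp] <;> beta_reduce <;>
    simp only [Fin.reduceFinMk, Fin.ext_iff, Fin.val_zero, Fin.val_one, Fin.val_two,
      show ((3:Fin 4):ℕ) = 3 from rfl, show ((1:Fin 4):ℕ) = 1 from rfl] <;>
    norm_num
  · rw [hdd0]
  · rw [hdd1]
    field_simp
    ring
  · rw [hdd2]
  · rw [hdd3]
    field_simp
    ring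

end BivPPWave

end
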